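/- Let D be a k×k Metzler matrix, c > 0, μ ≤ 0, and ξ ∈ ℝ^k a positive right eigenvector of D with D ξ = μ ξ; set ξ̲ = min_i ξ_i. Let u : [0,∞) → ℝ^k be a nonnegative solution of the cumulant system with u_0 = λ ∈ ℝ^k, λ ≥ 0, and define C_t = max_{1≤i≤k} u_{t,i}/ξ_i. If μ = 0, then for all t ≥ 0, C_t ≤ C_0 / (1 + (c ξ̲ / 2) C_0 t), and consequently C_t ≤ 2 / (c ξ̲ t) for all t > 0. If μ < 0, then for all t ≥ 0, C_t ≤ C_0 e^{μ t} / (1 + (c ξ̲ / (2|μ|)) C_0 (1 − e^{μ t})), and consequently C_t ≤ 2|μ| e^{μ t} / (c ξ̲ (1 − e^{μ t})) for all t > 0. -/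

import Mathlib

open Filter Topology

set_option maxHeartbeats 1000000 in
/-- (Lemma 2.3 (ii) of the paper.) Upper bounds on
`C_t = max_i u_{t,i}/ξ_i` for a nonnegative solution of the cumulant system,
in the critical (`μ = 0`) and subcritical (`μ < 0`) cases. Here `ξ̲ = min_i ξ_i`. -/
theorem stmt2 (k : ℕ) (hk : 1 ≤ k) (c : ℝ) (hc : 0 < c)
    (D : Matrix (Fin k) (Fin k) ℝ)
    (hMetzler : ∀ i j : Fin k, i ≠ j → 0 ≤ D i j)
    (μ : ℝ) (hμ : μ ≤ 0) (ξ : Fin k → ℝ) (hξpos : ∀ i, 0 < ξ i)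
    (heig : D.mulVec ξ = μ • ξ)
    (lam : Fin k → ℝ) (hlam : ∀ i, 0 ≤ lam i)
    (u : ℝ → Fin k → ℝ)
    (hsol : ∀ t ∈ Set.Ici (0 : ℝ),
      HasDerivAt u (D.mulVec (u t) - (c / 2) • (u t * u t)) t)
    (hnonneg : ∀ t ∈ Set.Ici (0 : ℝ), ∀ i : Fin k, 0 ≤ u t i)
    (hinit : u 0 = lam)
    (C : ℝ → ℝ) (hC : ∀ t, C t = ⨆ i, u t i / ξ i)
    (ξmin : ℝ) (hξmin : ξmin = ⨅ i, ξ i) :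
    (μ = 0 →
      (∀ t ≥ (0 : ℝ), C t ≤ C 0 / (1 + c * ξmin / 2 * C 0 * t)) ∧
      (∀ t > (0 : ℝ), C t ≤ 2 / (c * ξmin * t))) ∧
    (μ < 0 →
      (∀ t ≥ (0 : ℝ), C t ≤ C 0 * Real.exp (μ * t) /
        (1 + c * ξmin / (2 * |μ|) * C 0 * (1 - Real.exp (μ * t)))) ∧
      (∀ t > (0 : ℝ), C t ≤ 2 * |μ| * Real.exp (μ * t) /
        (c * ξmin * (1 - Real.exp (μ * t))))) := by
  have hk0 : 0 < k := hk
  haveI : Nonempty (Fin k) := ⟨⟨0, hk0⟩⟩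
  set a : ℝ := c * ξmin / 2 with ha_def
  -- ξmin facts
  have hξminle : ∀ i, ξmin ≤ ξ i := by
    intro i
    rw [hξmin]
    exact ciInf_le (Set.Finite.bddBelow (Set.finite_range ξ)) i
  have hξminpos : 0 < ξmin := by
    rw [hξmin]
    obtain ⟨i, _, hi⟩ := Finset.exists_mem_eq_inf' (Finset.univ_nonempty (α := Fin k)) ξ
    have h1 : Finset.univ.inf' Finset.univ_nonempty ξ = ⨅ i, ξ i := by
      apply le_antisymm
      · exact le_ciInf fun j => Finset.inf'_le _ (Finset.mem_univ j)
      · exact ciInf_le_of_le (Set.Finite.bddBelow (Set.finite_range ξ)) i (by rw [hi])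
    rw [← h1, hi]
    exact hξpos i
  have ha : 0 < a := by rw [ha_def]; positivity
  -- rewrite C as a finite sup
  have hCs : ∀ t, C t = Finset.univ.sup' Finset.univ_nonempty (fun i => u t i / ξ i) := by
    intro t
    rw [hC t]
    apply le_antisymm
    · exact ciSup_le fun i => Finset.le_sup' (fun j => u t j / ξ j) (Finset.mem_univ i)
    · exact Finset.sup'_le _ _ fun i _ =>
        le_ciSup (f := fun j => u t j / ξ j) (Set.Finite.bddAbove (Set.finite_range _)) i
  have hgle : ∀ t i, u t i / ξ i ≤ C t := by
    intro t i
    rw [hCs t]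
    exact Finset.le_sup' (fun j => u t j / ξ j) (Finset.mem_univ i)
  -- componentwise derivatives
  have hgder : ∀ x, 0 ≤ x → ∀ i, HasDerivAt (fun s => u s i / ξ i)
      ((D.mulVec (u x) i - c / 2 * (u x i * u x i)) / ξ i) x := by
    intro x hx i
    have h := (hasDerivAt_pi.1 (hsol x hx)) i
    have h2 := h.div_const (ξ i)
    exact h2
  have hC0nn : 0 ≤ C 0 := by
    refine le_trans ?_ (hgle 0 ⟨0, hk0⟩)
    exact div_nonneg (hnonneg 0 (Set.mem_Ici.2 le_rfl) _) (hξpos _).le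
  have hCnn : ∀ t, 0 ≤ t → 0 ≤ C t := by
    intro t ht
    refine le_trans ?_ (hgle t ⟨0, hk0⟩)
    exact div_nonneg (hnonneg t ht _) (hξpos _).le
  -- the Dini-type upper derivative of C
  set F : ℝ → ℝ := fun x => sSup ((fun i => (D.mulVec (u x) i - c / 2 * (u x i * u x i)) / ξ i)
      '' {i | u x i / ξ i = C x}) with hF_def
  have hSne : ∀ x, {i | u x i / ξ i = C x}.Nonempty := by
    intro x
    obtain ⟨i, _, hi⟩ := Finset.exists_mem_eq_sup' (Finset.univ_nonempty (α := Fin k))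
      (fun i => u x i / ξ i)
    exact ⟨i, by rw [Set.mem_setOf_eq, hCs x, hi]⟩
  have hFmem : ∀ x, ∃ i, u x i / ξ i = C x ∧
      (D.mulVec (u x) i - c / 2 * (u x i * u x i)) / ξ i = F x := by
    intro x
    have hmem := Set.Nonempty.csSup_mem
      ((hSne x).image (fun i => (D.mulVec (u x) i - c / 2 * (u x i * u x i)) / ξ i))
      ((Set.toFinite {i | u x i / ξ i = C x}).image
        (fun i => (D.mulVec (u x) i - c / 2 * (u x i * u x i)) / ξ i))
    obtain ⟨i, hi, hieq⟩ := hmem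
    exact ⟨i, hi, hieq⟩
  have hFle : ∀ x i, u x i / ξ i = C x →
      (D.mulVec (u x) i - c / 2 * (u x i * u x i)) / ξ i ≤ F x := by
    intro x i hi
    exact le_csSup ((Set.toFinite _).image _).bddAbove ⟨i, hi, rfl⟩
  -- main comparison lemma
  have key : ∀ B : ℝ → ℝ, (∀ s, 0 ≤ s → HasDerivAt B (μ * B s - a * (B s * B s)) s) →
      C 0 ≤ B 0 → (∀ s, 0 ≤ s → 0 ≤ B s) → ∀ t, 0 ≤ t → C t ≤ B t := by
    intro B hBd hB0 hBnn t ht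
    refine le_of_forall_pos_le_add fun δ hδ => ?_
    have hεpos : 0 < δ / Real.exp t := div_pos hδ (Real.exp_pos t)
    set ε : ℝ := δ / Real.exp t with hε_def
    have main : ∀ x ∈ Set.Icc (0:ℝ) t, C x ≤ B x + ε * Real.exp x := by
      apply image_le_of_liminf_slope_right_lt_deriv_boundary' (f := C) (f' := F)
        (B := fun s => B s + ε * Real.exp s)
        (B' := fun s => (μ * B s - a * (B s * B s)) + ε * Real.exp s)
      · -- continuity of C
        have hcont : ContinuousOn
            (fun s => Finset.univ.sup' Finset.univ_nonempty (fun i => u s i / ξ i))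
            (Set.Icc 0 t) := by
          apply ContinuousOn.finset_sup'_apply
          intro i _
          intro x hx
          exact ((hgder x hx.1 i).continuousAt).continuousWithinAt
        exact hcont.congr fun s _ => hCs s
      · -- Dini derivative bound
        intro x hx r hr
        have hx0 : (0:ℝ) ≤ x := hx.1
        have hall : ∀ i : Fin k, ∀ᶠ z in 𝓝[>] x, (u z i / ξ i - C x) / (z - x) < r := by
          intro i
          have hdi := hgder x hx0 i
          have hslope : Tendsto (slope (fun s => u s i / ξ i) x) (𝓝[>] x)
              (𝓝 ((D.mulVec (u x) i - c / 2 * (u x i * u x i)) / ξ i)) :=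
            (hasDerivAt_iff_tendsto_slope.1 hdi).mono_left
              (nhdsWithin_mono x fun z hz => ne_of_gt hz)
          by_cases hi : u x i / ξ i = C x
          · have h2 := hslope.eventually_lt_const (lt_of_le_of_lt (hFle x i hi) hr)
            filter_upwards [h2] with z hz
            rwa [slope_def_field, hi] at hz
          · have hlt : u x i / ξ i < C x := lt_of_le_of_ne (hgle x i) hi
            have hsub : Tendsto (fun z => z - x) (𝓝[>] x) (𝓝[>] (0:ℝ)) := by
              apply tendsto_nhdsWithin_of_tendsto_nhds_of_eventually_within
              · have : Tendsto (fun z : ℝ => z - x) (𝓝 x) (𝓝 (x - x)) :=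
                  (continuous_id.sub continuous_const).tendsto x
                simpa using this.mono_left nhdsWithin_le_nhds
              · filter_upwards [self_mem_nhdsWithin] with z hz
                exact sub_pos.2 (show x < z from hz)
            have hinv : Tendsto (fun z => (z - x)⁻¹) (𝓝[>] x) atTop :=
              tendsto_inv_nhdsGT_zero.comp hsub
            have hmul : Tendsto (fun z => (u x i / ξ i - C x) * (z - x)⁻¹) (𝓝[>] x) atBot :=
              (tendsto_const_mul_atBot_of_neg (sub_neg.2 hlt)).2 hinv
            have hev1 := hslope.eventually_lt_const
              (lt_add_one ((D.mulVec (u x) i - c / 2 * (u x i * u x i)) / ξ i))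
            have hev2 := hmul.eventually_lt_atBot
              (r - ((D.mulVec (u x) i - c / 2 * (u x i * u x i)) / ξ i + 1))
            filter_upwards [hev1, hev2, self_mem_nhdsWithin] with z h1 h2 hzx
            have hzne : z - x ≠ 0 := ne_of_gt (sub_pos.2 hzx)
            have heq : (u z i / ξ i - C x) / (z - x)
                = slope (fun s => u s i / ξ i) x z + (u x i / ξ i - C x) * (z - x)⁻¹ := by
              rw [slope_def_field, ← div_eq_mul_inv, ← add_div]
              congr 1
              ring
            rw [heq]
            linarith
        refine Filter.Eventually.frequently ?_
        filter_upwards [Filter.eventually_all.2 hall, self_mem_nhdsWithin] with z hz hzx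
        have hzx' : x < z := hzx
        rw [slope_def_field, div_lt_iff₀ (sub_pos.2 hzx')]
        have hCz : C z < C x + r * (z - x) := by
          rw [hCs z]
          rw [Finset.sup'_lt_iff]
          intro i _
          have hi := hz i
          rw [div_lt_iff₀ (sub_pos.2 hzx')] at hi
          linarith
        linarith
      · -- initial inequality
        have := Real.exp_zero
        simp only [this, mul_one]
        linarith
      · -- continuity of the barrier
        intro x hx
        exact ((hBd x hx.1).continuousAt.continuousWithinAt).add
          ((continuous_const.mul Real.continuous_exp).continuousWithinAt)
      · -- derivative of the barrier
        intro x hx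
        exact ((hBd x hx.1).add ((Real.hasDerivAt_exp x).const_mul ε)).hasDerivWithinAt
      · -- the strict differential inequality at contact points
        intro x hx hCx
        obtain ⟨i, hi, hgdF⟩ := hFmem x
        have hwB : C x = B x + ε * Real.exp x := hCx
        have hui : u x i = C x * ξ i := (div_eq_iff (ne_of_gt (hξpos i))).1 hi
        have hwnn : 0 ≤ C x := hCnn x hx.1
        have hules : ∀ j, u x j ≤ C x * ξ j := fun j => (div_le_iff₀ (hξpos j)).1 (hgle x j)
        have hmv : D.mulVec (u x) i ≤ C x * (μ * ξ i) := by
          have h1 : D.mulVec (u x) i = ∑ j, D i j * u x j := by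
            simp [Matrix.mulVec, dotProduct]
          have h2 : D.mulVec ξ i = ∑ j, D i j * ξ j := by
            simp [Matrix.mulVec, dotProduct]
          calc D.mulVec (u x) i = ∑ j, D i j * u x j := h1
            _ ≤ ∑ j, D i j * (C x * ξ j) := by
                refine Finset.sum_le_sum fun j _ => ?_
                rcases eq_or_ne j i with hji | hji
                · subst hji
                  rw [hui]
                · exact mul_le_mul_of_nonneg_left (hules j) (hMetzler i j (Ne.symm hji))
            _ = C x * ∑ j, D i j * ξ j := by
                rw [Finset.mul_sum]
                exact Finset.sum_congr rfl fun j _ => by ring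
            _ = C x * (μ * ξ i) := by
                rw [← h2, heig, Pi.smul_apply, smul_eq_mul]
        have hsq : C x * C x * (ξmin * ξ i) ≤ u x i * u x i := by
          rw [hui]
          nlinarith [mul_nonneg hwnn hwnn, hξminle i, (hξpos i).le, hξminpos.le,
            mul_nonneg (mul_nonneg hwnn hwnn) (mul_nonneg (hξpos i).le
              (sub_nonneg.2 (hξminle i)))]
        have hgd : (D.mulVec (u x) i - c / 2 * (u x i * u x i)) / ξ i
            ≤ μ * C x - a * (C x * C x) := by
          rw [div_le_iff₀ (hξpos i)]
          have hkey : (μ * C x - a * (C x * C x)) * ξ i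
              = C x * (μ * ξ i) - c / 2 * (C x * C x * (ξmin * ξ i)) := by
            rw [ha_def]; ring
          rw [hkey]
          have h4 : c / 2 * (C x * C x * (ξmin * ξ i)) ≤ c / 2 * (u x i * u x i) :=
            mul_le_mul_of_nonneg_left hsq (by positivity)
          linarith
        rw [← hgdF]
        refine lt_of_le_of_lt hgd ?_
        have hBx : 0 ≤ B x := hBnn x hx.1
        have hee : 0 < ε * Real.exp x := by positivity
        rw [hwB]
        nlinarith [mul_nonpos_of_nonpos_of_nonneg hμ hee.le,
          mul_nonneg ha.le (mul_nonneg hBx hee.le),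
          mul_nonneg ha.le (mul_nonneg hee.le hee.le), hee]
    have := main t ⟨ht, le_rfl⟩
    have heδ : ε * Real.exp t = δ := div_mul_cancel₀ _ (Real.exp_ne_zero t)
    linarith
  constructor
  · -- critical case μ = 0
    intro hμ0
    subst hμ0
    set B1 : ℝ → ℝ := fun s => C 0 / (1 + a * C 0 * s) with hB1_def
    have hden : ∀ s : ℝ, 0 ≤ s → 0 < 1 + a * C 0 * s := by
      intro s hs
      have : 0 ≤ a * C 0 * s := by positivity
      linarith
    have hBd1 : ∀ s, 0 ≤ s → HasDerivAt B1 (0 * B1 s - a * (B1 s * B1 s)) s := by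
      intro s hs
      have hd : HasDerivAt (fun y : ℝ => 1 + a * C 0 * y) (a * C 0) s := by
        simpa using ((hasDerivAt_id s).const_mul (a * C 0)).const_add 1
      have h := (hasDerivAt_const s (C 0)).div hd (ne_of_gt (hden s hs))
      convert h using 1
      · rfl
      · rfl
      · rfl
      rw [hB1_def]
      field_simp
      ring
    have hBnn1 : ∀ s, 0 ≤ s → 0 ≤ B1 s := fun s hs => div_nonneg hC0nn (hden s hs).le
    have res1 : ∀ t, 0 ≤ t → C t ≤ B1 t :=
      key B1 hBd1 (by rw [hB1_def]; simp) hBnn1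
    constructor
    · intro t ht
      exact res1 t ht
    · intro t ht
      refine (res1 t ht.le).trans ?_
      rw [hB1_def]
      have hpos2 : 0 < c * ξmin * t := by positivity
      rw [div_le_div_iff₀ (hden t ht.le) hpos2]
      have hx : 2 * a * (C 0 * t) = c * ξmin * (C 0 * t) := by rw [ha_def]; ring
      nlinarith [hx]
  · -- subcritical case μ < 0
    intro hμneg
    simp only [abs_of_neg hμneg]
    set ν : ℝ := -μ with hν_def
    have hν : 0 < ν := by rw [hν_def]; linarith
    clear_value ν
    set b : ℝ := c * ξmin / (2 * ν) with hb_def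
    clear_value b
    have hb : 0 < b := by rw [hb_def]; positivity
    have hEle : ∀ s : ℝ, 0 ≤ s → Real.exp (μ * s) ≤ 1 := fun s hs =>
      Real.exp_le_one_iff.2 (mul_nonpos_of_nonpos_of_nonneg hμ hs)
    have hden2 : ∀ s : ℝ, 0 ≤ s → 0 < 1 + b * C 0 * (1 - Real.exp (μ * s)) := by
      intro s hs
      have h0 : 0 ≤ b * C 0 * (1 - Real.exp (μ * s)) :=
        mul_nonneg (mul_nonneg hb.le hC0nn) (sub_nonneg.2 (hEle s hs))
      linarith
    set B2 : ℝ → ℝ :=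
      fun s => C 0 * Real.exp (μ * s) / (1 + b * C 0 * (1 - Real.exp (μ * s))) with hB2_def
    have hμne : μ ≠ 0 := ne_of_lt hμneg
    have hae : a = -(μ * b) := by
      rw [ha_def, hb_def, hν_def]
      field_simp
    have hBd2 : ∀ s, 0 ≤ s → HasDerivAt B2 (μ * B2 s - a * (B2 s * B2 s)) s := by
      intro s hs
      have h1 : HasDerivAt (fun y : ℝ => Real.exp (μ * y)) (Real.exp (μ * s) * μ) s := by
        simpa using ((hasDerivAt_id s).const_mul μ).exp
      have hnum : HasDerivAt (fun y : ℝ => C 0 * Real.exp (μ * y))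
          (C 0 * (Real.exp (μ * s) * μ)) s := h1.const_mul (C 0)
      have hden' : HasDerivAt (fun y : ℝ => 1 + b * C 0 * (1 - Real.exp (μ * y)))
          (b * C 0 * -(Real.exp (μ * s) * μ)) s := by
        simpa using (((h1.const_sub 1).const_mul (b * C 0)).const_add 1)
      have h := hnum.div hden' (ne_of_gt (hden2 s hs))
      convert h using 1
      · rfl
      · rfl
      · rfl
      rw [hB2_def, hae]
      field_simp [ne_of_gt (hden2 s hs)]
    have hBnn2 : ∀ s, 0 ≤ s → 0 ≤ B2 s := fun s hs =>
      div_nonneg (mul_nonneg hC0nn (Real.exp_pos _).le) (hden2 s hs).le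
    have hB02 : C 0 ≤ B2 0 := by
      rw [hB2_def]
      simp
    have res2 : ∀ t, 0 ≤ t → C t ≤ B2 t := key B2 hBd2 hB02 hBnn2
    constructor
    · intro t ht
      exact res2 t ht
    · intro t ht
      refine (res2 t ht.le).trans ?_
      have hEpos : 0 < Real.exp (μ * t) := Real.exp_pos _
      have hElt : Real.exp (μ * t) < 1 :=
        Real.exp_lt_one_iff.2 (mul_neg_of_neg_of_pos hμneg ht)
      have hpos2 : 0 < c * ξmin * (1 - Real.exp (μ * t)) := by
        have := sub_pos.2 hElt
        positivity
      rw [hB2_def]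
      rw [div_le_div_iff₀ (hden2 t ht.le) hpos2]
      have hb2 : b * (2 * ν) = c * ξmin := by
        rw [hb_def]
        field_simp
      have hkey : 2 * ν * Real.exp (μ * t) * (b * C 0 * (1 - Real.exp (μ * t)))
          = c * ξmin * (C 0 * Real.exp (μ * t) * (1 - Real.exp (μ * t))) := by
        rw [← hb2]; ring
      nlinarith [hkey, mul_pos (mul_pos (by norm_num : (0:ℝ) < 2) hν) hEpos]
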